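/- Let B be a G-graded k-algebra for a group G, and M, N G-graded B-bimodules. Define Hom_{B^e}(M,N)_0 as the space of bimodule maps f with f(M_α) ⊆ N_α for all α ∈ G, and Hom_{B^e}(M,N)_1 as the space of bimodule maps f with f(x)_α = 0 for all α ∈ G and x ∈ M_α. Then Hom_{B^e}(M,N) = Hom_{B^e}(M,N)_0 ⊕ Hom_{B^e}(M,N)_1 as vector spaces. -/

import Mathlib

set_option linter.unusedSectionVars false

open MulOpposite DirectSum

section aux

variable {k G N : Type*} [Field k] [Group G] [DecidableEq G]
  [AddCommGroup N] [Module k N]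

/-- projection onto the `α`-component of an internal direct sum -/
noncomputable def projAux (𝒩 : G → Submodule k N) (hN : DirectSum.IsInternal 𝒩) (α : G) :
    N →ₗ[k] 𝒩 α :=
  (DirectSum.component k G (fun α => 𝒩 α) α).comp
    (LinearEquiv.ofBijective (DirectSum.coeLinearMap 𝒩) hN).symm.toLinearMap

theorem projAux_of_mem {𝒩 : G → Submodule k N} {hN : DirectSum.IsInternal 𝒩} {α : G}
    {y : N} (hy : y ∈ 𝒩 α) : (projAux 𝒩 hN α y : N) = y := by
  have := hN.ofBijective_coeLinearMap_of_mem hy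
  simp only [projAux, LinearMap.comp_apply, LinearEquiv.coe_coe]
  erw [this]

theorem projAux_of_mem_ne {𝒩 : G → Submodule k N} {hN : DirectSum.IsInternal 𝒩} {α γ : G}
    {y : N} (hy : y ∈ 𝒩 γ) (hne : γ ≠ α) : projAux 𝒩 hN α y = 0 := by
  have := hN.ofBijective_coeLinearMap_of_mem_ne hne hy
  simp only [projAux, LinearMap.comp_apply, LinearEquiv.coe_coe]
  erw [this]

/-- induction over an internal direct sum -/
theorem top_induction {𝒩 : G → Submodule k N} (hN : DirectSum.IsInternal 𝒩)
    (C : N → Prop) (y : N) (hmem : ∀ α : G, ∀ z ∈ 𝒩 α, C z) (h0 : C 0)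
    (hadd : ∀ a b, C a → C b → C (a + b)) : C y := by
  have hy : y ∈ ⨆ α, 𝒩 α := by rw [hN.submodule_iSup_eq_top]; trivial
  exact Submodule.iSup_induction (motive := C) 𝒩 hy hmem h0 hadd

theorem sub_projAux_mem (𝒩 : G → Submodule k N) (hN : DirectSum.IsInternal 𝒩) (α : G)
    (y : N) : y - (projAux 𝒩 hN α y : N) ∈ ⨆ β ∈ {β : G | β ≠ α}, 𝒩 β := by
  refine top_induction hN
    (fun y => y - (projAux 𝒩 hN α y : N) ∈ ⨆ β ∈ {β : G | β ≠ α}, 𝒩 β) y ?_ ?_ ?_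
  · intro γ z hz
    by_cases h : γ = α
    · subst h
      rw [projAux_of_mem hz, sub_self]
      exact zero_mem _
    · rw [projAux_of_mem_ne hz h]
      simpa using Submodule.mem_iSup_of_mem γ (Submodule.mem_iSup_of_mem h hz)
  · simp
  · intro a b ha hb
    have : a + b - ((projAux 𝒩 hN α (a + b) : N)) =
        (a - (projAux 𝒩 hN α a : N)) + (b - (projAux 𝒩 hN α b : N)) := by
      rw [map_add]; push_cast; abel
    rw [this]; exact add_mem ha hb

end aux

section aux2

variable {k G B N : Type*} [Field k] [Group G] [DecidableEq G] [Ring B] [Algebra k B]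
  [AddCommGroup N] [Module k N] [Module B N] [Module Bᵐᵒᵖ N]
  [SMulCommClass B Bᵐᵒᵖ N] [IsScalarTower k B N] [IsScalarTower k Bᵐᵒᵖ N]
  {ℬ : G → Submodule k B} {𝒩 : G → Submodule k N} (hN : DirectSum.IsInternal 𝒩)
  (hB1 : (1 : B) ∈ ℬ 1)
  (hNgr : ∀ α β γ : G, ∀ a ∈ ℬ α, ∀ y ∈ 𝒩 β, ∀ c ∈ ℬ γ, op c • (a • y) ∈ 𝒩 (α * β * γ))

include hB1 hNgr

theorem smul_mem_graded {β γ : G} {b : B} (hb : b ∈ ℬ β) {y : N} (hy : y ∈ 𝒩 γ) :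
    b • y ∈ 𝒩 (β * γ) := by
  have := hNgr β γ 1 b hb y hy 1 hB1
  simpa using this

theorem op_smul_mem_graded {γ δ : G} {c : B} (hc : c ∈ ℬ γ) {y : N} (hy : y ∈ 𝒩 δ) :
    op c • y ∈ 𝒩 (δ * γ) := by
  have := hNgr 1 δ γ 1 hB1 y hy c hc
  simpa using this

theorem projAux_smul_left {β : G} {b : B} (hb : b ∈ ℬ β) (α : G) (y : N) :
    (projAux 𝒩 hN (β * α) (b • y) : N) = b • (projAux 𝒩 hN α y : N) := by
  refine top_induction hN
    (fun y => (projAux 𝒩 hN (β * α) (b • y) : N) = b • (projAux 𝒩 hN α y : N)) y ?_ ?_ ?_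
  · intro γ z hz
    by_cases h : γ = α
    · subst h
      rw [projAux_of_mem hz, projAux_of_mem (smul_mem_graded hB1 hNgr hb hz)]
    · rw [projAux_of_mem_ne hz h,
        projAux_of_mem_ne (smul_mem_graded hB1 hNgr hb hz)
          (fun hc => h (mul_left_cancel hc))]
      simp
  · simp
  · intro a c ha hc
    rw [smul_add, map_add, map_add]
    push_cast
    rw [ha, hc, smul_add]

theorem projAux_smul_right {γ : G} {c : B} (hc : c ∈ ℬ γ) (α : G) (y : N) :
    (projAux 𝒩 hN (α * γ) (op c • y) : N) = op c • (projAux 𝒩 hN α y : N) := by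
  refine top_induction hN
    (fun y => (projAux 𝒩 hN (α * γ) (op c • y) : N) = op c • (projAux 𝒩 hN α y : N)) y ?_ ?_ ?_
  · intro δ z hz
    by_cases h : δ = α
    · subst h
      rw [projAux_of_mem hz, projAux_of_mem (op_smul_mem_graded hB1 hNgr hc hz)]
    · rw [projAux_of_mem_ne hz h,
        projAux_of_mem_ne (op_smul_mem_graded hB1 hNgr hc hz)
          (fun hh => h (mul_right_cancel hh))]
      simp
  · simp
  · intro a d ha hd
    rw [smul_add, map_add, map_add]
    push_cast
    rw [ha, hd, smul_add]

end aux2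

section aux3

variable {k G M N : Type*} [Field k] [Group G] [DecidableEq G]
  [AddCommGroup M] [Module k M] [AddCommGroup N] [Module k N]

/-- the diagonal part of a linear map between internally graded modules -/
noncomputable def diagPart (ℳ : G → Submodule k M) (𝒩 : G → Submodule k N)
    (hM : DirectSum.IsInternal ℳ) (hN : DirectSum.IsInternal 𝒩)
    (f : M →ₗ[k] N) : M →ₗ[k] N :=
  (DirectSum.toModule k G N
      (fun α => (𝒩 α).subtype ∘ₗ (projAux 𝒩 hN α) ∘ₗ f ∘ₗ (ℳ α).subtype)).comp
    (LinearEquiv.ofBijective (DirectSum.coeLinearMap ℳ) hM).symm.toLinearMap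

theorem diagPart_apply_of_mem {ℳ : G → Submodule k M} {𝒩 : G → Submodule k N}
    {hM : DirectSum.IsInternal ℳ} {hN : DirectSum.IsInternal 𝒩} {f : M →ₗ[k] N}
    {α : G} {x : M} (hx : x ∈ ℳ α) :
    diagPart ℳ 𝒩 hM hN f x = (projAux 𝒩 hN α (f x) : N) := by
  have h1 : (LinearEquiv.ofBijective (DirectSum.coeLinearMap ℳ) hM).symm x =
      DirectSum.lof k G (fun α => ℳ α) α ⟨x, hx⟩ := by
    rw [LinearEquiv.symm_apply_eq]
    show x = DirectSum.coeLinearMap ℳ (DirectSum.lof k G (fun α => ℳ α) α ⟨x, hx⟩)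
    rw [DirectSum.lof_eq_of,
      DirectSum.coeLinearMap_of]
  simp only [diagPart, LinearMap.comp_apply, LinearEquiv.coe_coe]
  rw [h1, DirectSum.toModule_lof]
  rfl

end aux3


open MulOpposite

/-- let `B` be a `G`-graded `k`-algebra and `M`, `N` `G`-graded
`B`-bimodules.  Inside the space of `B`-bimodule homomorphisms `M → N`, the
grading-preserving ones (`f (M_α) ⊆ N_α`) and those killing every diagonal component
(`(f x)_α = 0` for `x ∈ M_α`, expressed as `f x ∈ ⨆_{β ≠ α} N_β`) form complementary
subspaces: their intersection is trivial and their sum is the whole space of bimodule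
homomorphisms. -/
theorem stmt_19 (k G B M N : Type*) [Field k] [Group G] [DecidableEq G]
    [Ring B] [Algebra k B]
    [AddCommGroup M] [Module k M] [Module B M] [Module Bᵐᵒᵖ M]
    [SMulCommClass B Bᵐᵒᵖ M] [IsScalarTower k B M] [IsScalarTower k Bᵐᵒᵖ M]
    [AddCommGroup N] [Module k N] [Module B N] [Module Bᵐᵒᵖ N]
    [SMulCommClass B Bᵐᵒᵖ N] [IsScalarTower k B N] [IsScalarTower k Bᵐᵒᵖ N]
    -- the `G`-grading on `B`, `M` and `N`
    (ℬ : G → Submodule k B) (ℳ : G → Submodule k M) (𝒩 : G → Submodule k N)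
    (hB : DirectSum.IsInternal ℬ) (hM : DirectSum.IsInternal ℳ)
    (hN : DirectSum.IsInternal 𝒩)
    (hB1 : (1 : B) ∈ ℬ 1)
    (hBmul : ∀ α β : G, ∀ a ∈ ℬ α, ∀ b ∈ ℬ β, a * b ∈ ℬ (α * β))
    (hMgr : ∀ α β γ : G, ∀ a ∈ ℬ α, ∀ x ∈ ℳ β, ∀ c ∈ ℬ γ,
      op c • (a • x) ∈ ℳ (α * β * γ))
    (hNgr : ∀ α β γ : G, ∀ a ∈ ℬ α, ∀ y ∈ 𝒩 β, ∀ c ∈ ℬ γ,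
      op c • (a • y) ∈ 𝒩 (α * β * γ))
    -- the space of `B`-bimodule homomorphisms and its two subspaces
    (Hom₀ Hom₁ HomBe : Submodule k (M →ₗ[k] N))
    (hHomBe : HomBe = {f : M →ₗ[k] N |
        (∀ (b : B) (x : M), f (b • x) = b • f x) ∧
        (∀ (b : Bᵐᵒᵖ) (x : M), f (b • x) = b • f x)})
    (hHom₀ : Hom₀ = {f ∈ HomBe | ∀ α : G, ∀ x ∈ ℳ α, f x ∈ 𝒩 α})
    (hHom₁ : Hom₁ = {f ∈ HomBe | ∀ α : G, ∀ x ∈ ℳ α,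
        f x ∈ ⨆ β ∈ {β : G | β ≠ α}, 𝒩 β}) :
    Hom₀ ⊔ Hom₁ = HomBe ∧ Hom₀ ⊓ Hom₁ = ⊥ := by

  -- membership characterizations
  have memBe : ∀ f : M →ₗ[k] N, f ∈ HomBe ↔
      ((∀ (b : B) (x : M), f (b • x) = b • f x) ∧
        (∀ (b : Bᵐᵒᵖ) (x : M), f (b • x) = b • f x)) := by
    intro f
    rw [← SetLike.mem_coe, hHomBe]; rfl
  have mem₀ : ∀ f : M →ₗ[k] N, f ∈ Hom₀ ↔
      (f ∈ HomBe ∧ ∀ α : G, ∀ x ∈ ℳ α, f x ∈ 𝒩 α) := by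
    intro f
    rw [← SetLike.mem_coe, hHom₀]; rfl
  have mem₁ : ∀ f : M →ₗ[k] N, f ∈ Hom₁ ↔
      (f ∈ HomBe ∧ ∀ α : G, ∀ x ∈ ℳ α, f x ∈ ⨆ β ∈ {β : G | β ≠ α}, 𝒩 β) := by
    intro f
    rw [← SetLike.mem_coe, hHom₁]; rfl
  constructor
  · apply le_antisymm
    · exact sup_le (fun f hf => ((mem₀ f).1 hf).1) (fun f hf => ((mem₁ f).1 hf).1)
    · intro f hf
      obtain ⟨hfl, hfr⟩ := (memBe f).1 hf
      set f₀ : M →ₗ[k] N := diagPart ℳ 𝒩 hM hN f with hf₀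
      have key : ∀ α : G, ∀ x ∈ ℳ α, f₀ x = (projAux 𝒩 hN α (f x) : N) :=
        fun α x hx => diagPart_apply_of_mem hx
      -- f₀ is a left B-module map
      have hleft : ∀ (b : B) (x : M), f₀ (b • x) = b • f₀ x := by
        intro b
        refine top_induction hB (fun b => ∀ x : M, f₀ (b • x) = b • f₀ x) b ?_ ?_ ?_
        · intro β b hb x
          refine top_induction hM (fun x => f₀ (b • x) = b • f₀ x) x ?_ ?_ ?_
          · intro α x hx
            have hbx : b • x ∈ ℳ (β * α) := by
              simpa using hMgr β α 1 b hb x hx 1 hB1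
            rw [key _ _ hbx, key _ _ hx, hfl b x, projAux_smul_left hN hB1 hNgr hb]
          · simp
          · intro a c ha hc
            rw [smul_add, map_add, ha, hc, map_add, smul_add]
        · intro x; simp
        · intro a c ha hc x
          rw [add_smul, map_add, ha, hc, add_smul]
      have hright : ∀ (c : Bᵐᵒᵖ) (x : M), f₀ (c • x) = c • f₀ x := by
        intro c
        obtain ⟨c⟩ := c
        refine top_induction hB (fun c => ∀ x : M, f₀ (op c • x) = op c • f₀ x) c ?_ ?_ ?_
        · intro γ c hc x
          refine top_induction hM (fun x => f₀ (op c • x) = op c • f₀ x) x ?_ ?_ ?_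
          · intro α x hx
            have hcx : op c • x ∈ ℳ (α * γ) := by
              simpa using hMgr 1 α γ 1 hB1 x hx c hc
            rw [key _ _ hcx, key _ _ hx, hfr (op c) x, projAux_smul_right hN hB1 hNgr hc]
          · simp
          · intro a d ha hd
            rw [smul_add, map_add, ha, hd, map_add, smul_add]
        · intro x
          rw [op_zero, zero_smul, zero_smul, map_zero]
        · intro a d ha hd x
          rw [op_add, add_smul, map_add, ha, hd, add_smul]
      have hf₀Be : f₀ ∈ HomBe := (memBe f₀).2 ⟨hleft, hright⟩
      have hf₀mem : f₀ ∈ Hom₀ := by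
        refine (mem₀ f₀).2 ⟨hf₀Be, fun α x hx => ?_⟩
        rw [key α x hx]
        exact (projAux 𝒩 hN α (f x)).2
      have hf₁mem : f - f₀ ∈ Hom₁ := by
        refine (mem₁ (f - f₀)).2 ⟨sub_mem hf hf₀Be, fun α x hx => ?_⟩
        rw [LinearMap.sub_apply, key α x hx]
        exact sub_projAux_mem 𝒩 hN α (f x)
      have : f = f₀ + (f - f₀) := by abel
      rw [this]
      exact Submodule.add_mem_sup hf₀mem hf₁mem
  · rw [eq_bot_iff]
    intro f hf
    obtain ⟨hf0, hf1⟩ := Submodule.mem_inf.1 hf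
    have h0 := ((mem₀ f).1 hf0).2
    have h1 := ((mem₁ f).1 hf1).2
    have hzero : ∀ x : M, f x = 0 := by
      intro x
      refine top_induction hM (fun x => f x = 0) x ?_ ?_ ?_
      · intro α x hx
        have hd : Disjoint (𝒩 α) (⨆ β ∈ {β : G | β ≠ α}, 𝒩 β) :=
          hN.submodule_iSupIndep α
        have : f x ∈ (⊥ : Submodule k N) :=
          hd.le_bot (Submodule.mem_inf.2 ⟨h0 α x hx, h1 α x hx⟩)
        simpa using this
      · simp
      · intro a c ha hc
        rw [map_add, ha, hc, add_zero]
    rw [Submodule.mem_bot]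
    exact LinearMap.ext hzero
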